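/- Let ((X_i, 𝒰_i))_{i ∈ I} be a family of uniform spaces and let 𝓕 be a filter on I. Identify (∏_{i ∈ I} X_i) × (∏_{i ∈ I} X_i) with ∏_{i ∈ I} (X_i × X_i). Then the collection of boxes ∏_{i ∈ I} B_i with B_i ∈ 𝒰_i for all i and {i ∈ I : B_i = X_i × X_i} ∈ 𝓕 is a base for a uniformity on ∏_{i ∈ I} X_i: each such box contains the diagonal, for each such box U there is such a box V with V ⊆ U⁻¹ and such a box W with W ∘ W ⊆ U, and any two such boxes contain a common such box; hence there is a uniform space structure on ∏_{i ∈ I} X_i whose uniformity filter is generated by these boxes. -/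

import Mathlib

open Set Filter Uniformity

/-- The boxes of entourages: subsets of `(∏ i, X i) × (∏ i, X i)` corresponding,
under the identification with `∏ i, (X i × X i)`, to products `∏ i, B i` with
`B i ∈ 𝓤 (X i)` for all `i` and distinguished index set
`{i | B i = univ}` in `F`. -/
def uniformBoxes {I : Type*} (X : I → Type*) [∀ i, UniformSpace (X i)]
    (F : Filter I) : Set (Set ((∀ i, X i) × (∀ i, X i))) :=
  {S | ∃ B : ∀ i, Set (X i × X i), (∀ i, B i ∈ 𝓤 (X i)) ∧
    {i | B i = Set.univ} ∈ F ∧ S = {p | ∀ i, (p.1 i, p.2 i) ∈ B i}}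

section aux

variable {I : Type*} (X : I → Type*) [∀ i, UniformSpace (X i)] (F : Filter I)

lemma uniformBoxes_diag : ∀ S ∈ uniformBoxes X F, SetRel.id ⊆ S := by
  rintro S ⟨B, hB, -, rfl⟩ p hp
  replace hp : p.1 = p.2 := hp
  intro i
  rw [hp]
  exact refl_mem_uniformity (hB i)

lemma uniformBoxes_swap :
    ∀ S ∈ uniformBoxes X F, ∃ V ∈ uniformBoxes X F, V ⊆ Prod.swap ⁻¹' S := by
  rintro S ⟨B, hB, hF, rfl⟩
  refine ⟨{p | ∀ i, (p.1 i, p.2 i) ∈ Prod.swap ⁻¹' (B i)},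
    ⟨fun i => Prod.swap ⁻¹' (B i), fun i => tendsto_swap_uniformity (hB i),
      mem_of_superset hF ?_, rfl⟩, ?_⟩
  · intro i hi
    simp only [mem_setOf_eq] at hi ⊢
    rw [hi]; ext p; simp
  · intro p hp i
    exact hp i

lemma uniformBoxes_comp :
    ∀ S ∈ uniformBoxes X F, ∃ W ∈ uniformBoxes X F, SetRel.comp W W ⊆ S := by
  rintro S ⟨B, hB, hF, rfl⟩
  classical
  choose C hC hCcomp using fun i => comp_mem_uniformity_sets (hB i)
  set D : ∀ i, Set (X i × X i) := fun i => if B i = Set.univ then Set.univ else C i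
    with hD
  have hDmem : ∀ i, D i ∈ 𝓤 (X i) := fun i => by
    by_cases h : B i = Set.univ <;> simp [hD, h, hC i, univ_mem]
  have hDcomp : ∀ i, SetRel.comp (D i) (D i) ⊆ B i := fun i => by
    by_cases h : B i = Set.univ <;> simp [hD, h, hCcomp i]
  refine ⟨{p | ∀ i, (p.1 i, p.2 i) ∈ D i},
    ⟨D, hDmem, mem_of_superset hF fun i hi => by
      rw [mem_setOf_eq] at hi ⊢; simp only [hD]; rw [if_pos hi], rfl⟩, ?_⟩
  rintro ⟨a, c⟩ ⟨b, hab, hbc⟩ i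
  exact hDcomp i ⟨b i, hab i, hbc i⟩

lemma uniformBoxes_inter :
    ∀ S ∈ uniformBoxes X F, ∀ T ∈ uniformBoxes X F,
      ∃ W ∈ uniformBoxes X F, W ⊆ S ∩ T := by
  rintro S ⟨B, hB, hBF, rfl⟩ T ⟨C, hC, hCF, rfl⟩
  refine ⟨{p | ∀ i, (p.1 i, p.2 i) ∈ B i ∩ C i},
    ⟨fun i => B i ∩ C i, fun i => inter_mem (hB i) (hC i),
      mem_of_superset (inter_mem hBF hCF) ?_, rfl⟩, ?_⟩
  · rintro i ⟨hi1, hi2⟩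
    simp only [mem_setOf_eq] at hi1 hi2 ⊢
    rw [hi1, hi2, univ_inter]
  · intro p hp
    exact ⟨fun i => (hp i).1, fun i => (hp i).2⟩

lemma uniformBoxes_univ : Set.univ ∈ uniformBoxes X F :=
  ⟨fun _ => Set.univ, fun _ => univ_mem, by simp, by simp⟩

lemma uniformBoxes_sInter {t : Set (Set ((∀ i, X i) × (∀ i, X i)))}
    (htfin : t.Finite) (hts : t ⊆ uniformBoxes X F) :
    ∃ V ∈ uniformBoxes X F, V ⊆ ⋂₀ t := by
  revert hts
  refine Set.Finite.induction_on (motive := fun t _ => t ⊆ uniformBoxes X F →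
      ∃ V ∈ uniformBoxes X F, V ⊆ ⋂₀ t) t htfin
    (fun _ => ⟨Set.univ, uniformBoxes_univ X F, by simp⟩) ?_
  intro a u ha hu ih hts
  · obtain ⟨V, hV, hVsub⟩ := ih (fun x hx => hts (Set.mem_insert_of_mem _ hx))
    have haB : a ∈ uniformBoxes X F := hts (Set.mem_insert _ _)
    obtain ⟨W, hW, hWsub⟩ := uniformBoxes_inter X F a haB V hV
    refine ⟨W, hW, ?_⟩
    rw [Set.sInter_insert]
    exact hWsub.trans (Set.inter_subset_inter_right _ hVsub)

lemma mem_generate_uniformBoxes {s : Set ((∀ i, X i) × (∀ i, X i))} :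
    s ∈ Filter.generate (uniformBoxes X F) ↔ ∃ V ∈ uniformBoxes X F, V ⊆ s := by
  constructor
  · intro hs
    rw [Filter.mem_generate_iff] at hs
    obtain ⟨t, hts, htfin, hsub⟩ := hs
    obtain ⟨V, hV, hVsub⟩ := uniformBoxes_sInter X F htfin hts
    exact ⟨V, hV, hVsub.trans hsub⟩
  · rintro ⟨V, hV, hVs⟩
    exact (Filter.mem_generate_iff).2 ⟨{V}, by simpa, Set.finite_singleton _,
      by simpa⟩

end aux

/-- For a family of uniform spaces and a filter `𝓕` on `I`, the boxes of
entourages with distinguished index set in `𝓕` form a base for a uniformity on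
`∏ i, X i`: each box contains the diagonal, each box contains (the inverse of) a
box, each box contains the composition square of a box, any two boxes contain a
common box, and hence there is a uniform space structure on the product whose
uniformity filter is generated by these boxes. -/
theorem uniformBoxes_isBase {I : Type*} (X : I → Type*) [∀ i, UniformSpace (X i)]
    (F : Filter I) :
    (∀ S ∈ uniformBoxes X F, SetRel.id ⊆ S) ∧
    (∀ S ∈ uniformBoxes X F, ∃ V ∈ uniformBoxes X F, V ⊆ Prod.swap ⁻¹' S) ∧
    (∀ S ∈ uniformBoxes X F, ∃ W ∈ uniformBoxes X F, SetRel.comp W W ⊆ S) ∧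
    (∀ S ∈ uniformBoxes X F, ∀ T ∈ uniformBoxes X F,
      ∃ W ∈ uniformBoxes X F, W ⊆ S ∩ T) ∧
    (∃ u : UniformSpace (∀ i, X i),
      @uniformity (∀ i, X i) u = Filter.generate (uniformBoxes X F)) := by
  refine ⟨uniformBoxes_diag X F, uniformBoxes_swap X F, uniformBoxes_comp X F,
    uniformBoxes_inter X F, ?_⟩
  refine ⟨UniformSpace.ofCore
    { uniformity := Filter.generate (uniformBoxes X F)
      refl := ?_
      symm := ?_
      comp := ?_ }, rfl⟩
  · intro s hs
    rw [Filter.mem_principal]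
    obtain ⟨V, hV, hVs⟩ := (mem_generate_uniformBoxes X F).1 hs
    exact (uniformBoxes_diag X F V hV).trans hVs
  · intro s hs
    obtain ⟨V, hV, hVs⟩ := (mem_generate_uniformBoxes X F).1 hs
    obtain ⟨W, hW, hWs⟩ := uniformBoxes_swap X F V hV
    exact (mem_generate_uniformBoxes X F).2
      ⟨W, hW, hWs.trans (Set.preimage_mono hVs)⟩
  · intro s hs
    obtain ⟨V, hV, hVs⟩ := (mem_generate_uniformBoxes X F).1 hs
    obtain ⟨W, hW, hWs⟩ := uniformBoxes_comp X F V hV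
    exact Filter.mem_lift'_sets (monotone_id.relComp monotone_id) |>.2
      ⟨W, (mem_generate_uniformBoxes X F).2 ⟨W, hW, le_refl _⟩,
        hWs.trans hVs⟩
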